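/- Let ∈ ℝ^{N×N} be a symmetric row-and-column normalized adjacency matrix = D̃^{-1/2}(A + I)D̃^{-1/2} of a connected undirected graph with self-loops, where D̃ is the diagonal degree matrix of A + I. Then the eigenvalue 1 of is simple with eigenvector proportional to D̃^{1/2}·1, all other eigenvalues have absolute value strictly less than 1, and consequently for any X ∈ ℝ^{N×d}, the powers Â^K X converge as K → ∞ to a matrix each of whose columns is a scalar multiple of D̃^{1/2}·1; in particular all rows of the limit are proportional to each other. -/

import Mathlib

theorem stmt11 {N : ℕ} (hN : 0 < N) (A : Matrix (Fin N) (Fin N) ℝ)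
    (hA01 : ∀ i j, A i j = 0 ∨ A i j = 1) (hsym : A.transpose = A)
    (hconn : ∀ i j : Fin N, ∃ k : ℕ, 0 < ((A + 1) ^ k) i j)
    (deg : Fin N → ℝ) (hdeg : ∀ i, deg i = 1 + ∑ j, A i j)
    (Ahat : Matrix (Fin N) (Fin N) ℝ)
    (hAhat : ∀ i j, Ahat i j = (A + 1) i j / (Real.sqrt (deg i) * Real.sqrt (deg j))) :
    (Ahat.mulVec (fun i => Real.sqrt (deg i)) = fun i => Real.sqrt (deg i)) ∧
    (∀ v : Fin N → ℝ, Ahat.mulVec v = v → ∃ c : ℝ, v = c • fun i => Real.sqrt (deg i)) ∧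
    (∀ (μ : ℝ) (v : Fin N → ℝ), v ≠ 0 → Ahat.mulVec v = μ • v →
      |μ| ≤ 1 ∧ (|μ| = 1 → μ = 1)) ∧
    (∀ (d : ℕ) (X : Matrix (Fin N) (Fin d) ℝ), ∃ c : Fin d → ℝ,
      Filter.Tendsto (fun K : ℕ => Ahat ^ K * X) Filter.atTop
        (nhds (Matrix.of fun i j => c j * Real.sqrt (deg i)))) := by
  set M : Matrix (Fin N) (Fin N) ℝ := A + 1 with hM
  have hA0 : ∀ i j, 0 ≤ A i j := fun i j => by rcases hA01 i j with h | h <;> simp [h]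
  have hM0 : ∀ i j, 0 ≤ M i j := by
    intro i j
    simp only [hM, Matrix.add_apply, Matrix.one_apply]
    have := hA0 i j
    split <;> linarith
  have hMd : ∀ i, 0 < M i i := by
    intro i
    simp only [hM, Matrix.add_apply, Matrix.one_apply_eq]
    have := hA0 i i; linarith
  have hrow : ∀ i, ∑ j, M i j = deg i := by
    intro i
    simp only [hM, Matrix.add_apply, Matrix.one_apply, Finset.sum_add_distrib, hdeg,
      Finset.sum_ite_eq, Finset.mem_univ, if_true]
    ring
  have hdpos : ∀ i, 0 < deg i := by
    intro i
    rw [hdeg]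
    have : (0:ℝ) ≤ ∑ j, A i j := Finset.sum_nonneg fun j _ => hA0 i j
    linarith
  set s : Fin N → ℝ := fun i => Real.sqrt (deg i) with hs
  have hspos : ∀ i, 0 < s i := fun i => Real.sqrt_pos.mpr (hdpos i)
  have hss : ∀ i, s i * s i = deg i := fun i => Real.mul_self_sqrt (hdpos i).le
  -- key eigen-equation rewrite
  have key : ∀ (v : Fin N → ℝ) (μ : ℝ), Ahat.mulVec v = μ • v →
      ∀ i, ∑ j, M i j * (v j / s j) = μ * (deg i * (v i / s i)) := by
    intro v μ h i
    have h1 : ∑ j, (M i j / (s i * s j)) * v j = μ * v i := by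
      have := congrFun h i
      simpa [Matrix.mulVec, dotProduct, hAhat] using this
    have h2 : s i * ∑ j, (M i j / (s i * s j)) * v j = ∑ j, M i j * (v j / s j) := by
      rw [Finset.mul_sum]
      refine Finset.sum_congr rfl fun j _ => ?_
      have hi := (hspos i).ne'
      have hj := (hspos j).ne'
      field_simp
    rw [← h2, h1, ← hss i]
    have hi := (hspos i).ne'
    field_simp
  -- Part 1
  have part1 : Ahat.mulVec s = s := by
    funext i
    simp only [Matrix.mulVec, dotProduct, hAhat]
    have : ∀ j, M i j / (s i * s j) * s j = M i j / s i := by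
      intro j
      have hi := (hspos i).ne'
      have hj := (hspos j).ne'
      field_simp
    simp only [hM] at this ⊢
    rw [Finset.sum_congr rfl fun j _ => this j, ← Finset.sum_div]
    rw [show ∑ j, (A+1) i j = deg i from hrow i]
    rw [← hss i]
    field_simp

  -- nonnegativity of powers of M
  have hMk0 : ∀ k : ℕ, ∀ i j, 0 ≤ (M ^ k) i j := by
    intro k
    induction k with
    | zero => intro i j; simp [Matrix.one_apply]; split <;> norm_num
    | succ k ih =>
      intro i j
      rw [pow_succ, Matrix.mul_apply]
      exact Finset.sum_nonneg fun l _ => mul_nonneg (ih i l) (hM0 l j)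
  haveI : Nonempty (Fin N) := ⟨⟨0, hN⟩⟩
  -- Part 2
  have part2 : ∀ v : Fin N → ℝ, Ahat.mulVec v = v → ∃ c : ℝ, v = c • s := by
    intro v hv
    set w : Fin N → ℝ := fun j => v j / s j with hw
    have heq : ∀ i, ∑ j, M i j * w j = deg i * w i := by
      intro i
      have := key v 1 (by rw [one_smul]; exact hv) i
      simpa using this
    obtain ⟨i0, -, hi0⟩ := Finset.exists_max_image Finset.univ w ⟨Classical.arbitrary _, Finset.mem_univ _⟩
    set c : ℝ := w i0 with hc
    have hstep : ∀ i, w i = c → ∀ j, 0 < M i j → w j = c := by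
      intro i hwi j hMij
      have hsum : ∑ j', M i j' * (c - w j') = 0 := by
        have : ∑ j', M i j' * (c - w j') = (∑ j', M i j') * c - ∑ j', M i j' * w j' := by
          rw [Finset.sum_mul, ← Finset.sum_sub_distrib]
          exact Finset.sum_congr rfl fun j' _ => by ring
        rw [this, hrow i, heq i, hwi]
        ring
      have hterm := (Finset.sum_eq_zero_iff_of_nonneg (fun j' _ =>
        mul_nonneg (hM0 i j') (sub_nonneg.mpr (hi0 j' (Finset.mem_univ _))))).mp hsum j
        (Finset.mem_univ _)
      rcases mul_eq_zero.mp hterm with h | h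
      · exact absurd h hMij.ne'
      · linarith [sub_eq_zero.mp h]
    have hprop : ∀ k : ℕ, ∀ i j, 0 < (M ^ k) i j → w i = c → w j = c := by
      intro k
      induction k with
      | zero =>
        intro i j hpos hwi
        by_cases hij : i = j
        · rwa [← hij]
        · simp [Matrix.one_apply, hij] at hpos
      | succ k ih =>
        intro i j hpos hwi
        rw [pow_succ, Matrix.mul_apply] at hpos
        obtain ⟨l, -, hl⟩ : ∃ l ∈ Finset.univ, 0 < (M ^ k) i l * M l j := by
          by_contra hcon
          push_neg at hcon
          have : ∑ l, (M ^ k) i l * M l j ≤ 0 :=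
            Finset.sum_nonpos fun l hl' => hcon l hl'
          linarith
        rcases mul_pos_iff.mp hl with ⟨h1, h2⟩ | ⟨h1, h2⟩
        · exact hstep l (ih i l h1 hwi) j h2
        · exact absurd h1 (not_lt.mpr (hMk0 k i l))
      
    refine ⟨c, funext fun j => ?_⟩
    obtain ⟨k, hk⟩ := hconn i0 j
    have hwj : w j = c := hprop k i0 j hk rfl
    have : v j = c * s j := by
      simp only [hw] at hwj; field_simp [(hspos j).ne'] at hwj
      linarith
    simpa using this
  -- Part 3
  have part3 : ∀ (μ : ℝ) (v : Fin N → ℝ), v ≠ 0 → Ahat.mulVec v = μ • v →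
      |μ| ≤ 1 ∧ (|μ| = 1 → μ = 1) := by
    intro μ v hv0 hv
    set w : Fin N → ℝ := fun j => v j / s j with hw
    have heq : ∀ i, ∑ j, M i j * w j = μ * (deg i * w i) := key v μ hv
    obtain ⟨i0, -, hi0⟩ := Finset.exists_max_image Finset.univ (fun j => |w j|)
      ⟨Classical.arbitrary _, Finset.mem_univ _⟩
    set a : ℝ := |w i0| with ha
    have hapos : 0 < a := by
      obtain ⟨j, hj⟩ := Function.ne_iff.mp hv0
      have hwj : w j ≠ 0 := div_ne_zero hj (hspos j).ne'
      exact lt_of_lt_of_le (abs_pos.mpr hwj) (hi0 j (Finset.mem_univ _))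
    have h3 : |μ| * (deg i0 * a) ≤ deg i0 * a := by
      calc |μ| * (deg i0 * a) = |μ * (deg i0 * w i0)| := by
            rw [abs_mul, abs_mul, abs_of_pos (hdpos i0)]
        _ = |∑ j, M i0 j * w j| := by rw [heq i0]
        _ ≤ ∑ j, |M i0 j * w j| := Finset.abs_sum_le_sum_abs _ _
        _ ≤ ∑ j, M i0 j * a := Finset.sum_le_sum fun j _ => by
            rw [abs_mul, abs_of_nonneg (hM0 i0 j)]
            exact mul_le_mul_of_nonneg_left (hi0 j (Finset.mem_univ _)) (hM0 i0 j)
        _ = deg i0 * a := by rw [← Finset.sum_mul, hrow]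
    have hpos : 0 < deg i0 * a := mul_pos (hdpos i0) hapos
    refine ⟨(mul_le_iff_le_one_left hpos).mp h3, fun habs => ?_⟩
    by_contra hne
    have hμm1 : μ = -1 := by
      rcases (abs_eq (by norm_num : (0:ℝ) ≤ 1)).mp habs with h | h
      · exact absurd h hne
      · exact h
    have hbd := fun j => abs_le.mp (hi0 j (Finset.mem_univ _))
    rcases le_or_gt 0 (w i0) with hc | hc
    · have hwa : w i0 = a := (abs_of_nonneg hc).symm
      have hz : ∑ j, M i0 j * (w j + a) = 0 := by
        have : ∑ j, M i0 j * (w j + a) = (∑ j, M i0 j * w j) + (∑ j, M i0 j) * a := by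
          rw [Finset.sum_mul, ← Finset.sum_add_distrib]
          exact Finset.sum_congr rfl fun j _ => by ring
        rw [this, heq i0, hrow i0, hμm1, hwa]
        ring
      have hterm := (Finset.sum_eq_zero_iff_of_nonneg (fun j _ =>
        mul_nonneg (hM0 i0 j) (by linarith [(hbd j).1]))).mp hz i0 (Finset.mem_univ _)
      rcases mul_eq_zero.mp hterm with h | h
      · exact absurd h (hMd i0).ne'
      · rw [hwa] at h; linarith
    · have hwa : w i0 = -a := by rw [ha, abs_of_neg hc]; ring
      have hz : ∑ j, M i0 j * (a - w j) = 0 := by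
        have : ∑ j, M i0 j * (a - w j) = (∑ j, M i0 j) * a - ∑ j, M i0 j * w j := by
          rw [Finset.sum_mul, ← Finset.sum_sub_distrib]
          exact Finset.sum_congr rfl fun j _ => by ring
        rw [this, heq i0, hrow i0, hμm1, hwa]
        ring
      have hterm := (Finset.sum_eq_zero_iff_of_nonneg (fun j _ =>
        mul_nonneg (hM0 i0 j) (by linarith [(hbd j).2]))).mp hz i0 (Finset.mem_univ _)
      rcases mul_eq_zero.mp hterm with h | h
      · exact absurd h (hMd i0).ne'
      · rw [hwa] at h; linarith

  -- Part 4
  have part4 : ∀ (d : ℕ) (X : Matrix (Fin N) (Fin d) ℝ), ∃ c : Fin d → ℝ,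
      Filter.Tendsto (fun K : ℕ => Ahat ^ K * X) Filter.atTop
        (nhds (Matrix.of fun i j => c j * s i)) := by
    have hA' : ∀ i j, A j i = A i j := fun i j => congrFun (congrFun hsym i) j
    have hMsym : ∀ i j, M i j = M j i := by
      intro i j
      by_cases h : i = j
      · rw [h]
      · simp [hM, Matrix.add_apply, Matrix.one_apply, h, Ne.symm h, (hA' i j).symm]
    have hH : Ahat.IsHermitian := by
      ext i j
      simp only [Matrix.conjTranspose_apply, star_trivial, hAhat]
      rw [hMsym j i, mul_comm]
    set U : Matrix (Fin N) (Fin N) ℝ := (Matrix.IsHermitian.eigenvectorUnitary hH : Matrix (Fin N) (Fin N) ℝ) with hU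
    set E : Fin N → ℝ := hH.eigenvalues with hE
    have hUU : U * star U = 1 :=
      (Matrix.mem_unitaryGroup_iff).mp (Matrix.IsHermitian.eigenvectorUnitary hH).2
    have hUU' : star U * U = 1 :=
      (Matrix.mem_unitaryGroup_iff').mp (Matrix.IsHermitian.eigenvectorUnitary hH).2
    have hspec : Ahat = U * Matrix.diagonal E * star U := by
      have := hH.spectral_theorem
      simpa using this
    have hpow : ∀ K : ℕ, Ahat ^ K = U * Matrix.diagonal (fun k => E k ^ K) * star U := by
      intro K
      induction K with
      | zero => simp [hUU]
      | succ K ih =>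
        rw [pow_succ, ih, hspec]
        have h4 : ∀ (f g : Fin N → ℝ),
            U * Matrix.diagonal f * star U * (U * Matrix.diagonal g * star U)
              = U * (Matrix.diagonal f * Matrix.diagonal g) * star U := by
          intro f g
          calc U * Matrix.diagonal f * star U * (U * Matrix.diagonal g * star U)
              = U * Matrix.diagonal f * (star U * U) * (Matrix.diagonal g * star U) := by
                simp only [Matrix.mul_assoc]
            _ = U * (Matrix.diagonal f * Matrix.diagonal g) * star U := by
                rw [hUU', Matrix.mul_one]
                simp only [Matrix.mul_assoc]
        rw [h4]
        have h5 : Matrix.diagonal (fun k => E k ^ K) * Matrix.diagonal E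
            = Matrix.diagonal fun k => E k ^ (K + 1) := by
          rw [Matrix.diagonal_mul_diagonal]
          exact congrArg Matrix.diagonal (funext fun k => (pow_succ (E k) K).symm)
        rw [h5]
    have hEprop : ∀ k, |E k| ≤ 1 ∧ (|E k| = 1 → E k = 1) := by
      intro k
      have hvne : (⇑(hH.eigenvectorBasis k) : Fin N → ℝ) ≠ 0 := by
        intro h
        exact hH.eigenvectorBasis.orthonormal.ne_zero k (by ext i; exact congrFun h i)
      exact part3 (E k) _ hvne (hH.mulVec_eigenvectorBasis k)
    set L : Fin N → ℝ := fun k => if E k = 1 then 1 else 0 with hL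
    have htend : Filter.Tendsto (fun K : ℕ => fun k => E k ^ K) Filter.atTop (nhds L) := by
      rw [tendsto_pi_nhds]
      intro k
      by_cases hk : E k = 1
      · simp [hL, hk]
      · have hlt : |E k| < 1 :=
          lt_of_le_of_ne (hEprop k).1 (fun h => hk ((hEprop k).2 h))
        simpa [hL, hk] using tendsto_pow_atTop_nhds_zero_of_abs_lt_one hlt
    set P : Matrix (Fin N) (Fin N) ℝ := U * Matrix.diagonal L * star U with hP
    have hg : Continuous fun f : Fin N → ℝ => U * Matrix.diagonal f * star U :=
      (continuous_const.matrix_mul continuous_id.matrix_diagonal).matrix_mul continuous_const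
    have hPlim : Filter.Tendsto (fun K : ℕ => Ahat ^ K) Filter.atTop (nhds P) := by
      have h := (hg.tendsto L).comp htend
      exact Filter.Tendsto.congr (fun K => (hpow K).symm) h
    have hfix : Ahat * P = P := by
      have h1 : Filter.Tendsto (fun K : ℕ => Ahat ^ (K + 1)) Filter.atTop (nhds P) :=
        hPlim.comp (Filter.tendsto_add_atTop_nat 1)
      have h2 : Filter.Tendsto (fun K : ℕ => Ahat * Ahat ^ K) Filter.atTop (nhds (Ahat * P)) :=
        ((continuous_const.matrix_mul continuous_id).tendsto P).comp hPlim
      have h3 : (fun K : ℕ => Ahat ^ (K + 1)) = fun K : ℕ => Ahat * Ahat ^ K := by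
        funext K
        rw [pow_succ']
      rw [h3] at h1
      exact tendsto_nhds_unique h2 h1
    have hcols : ∀ j, ∃ c' : ℝ, (fun i => P i j) = c' • s := by
      intro j
      apply part2
      funext i
      calc (Ahat.mulVec fun i => P i j) i = (Ahat * P) i j := by
            simp [Matrix.mulVec, dotProduct, Matrix.mul_apply]
        _ = P i j := by rw [hfix]
    choose c' hc' using hcols
    intro d X
    refine ⟨fun j => ∑ k, c' k * X k j, ?_⟩
    have hPX : P * X = Matrix.of fun i j => (∑ k, c' k * X k j) * s i := by
      ext i j
      rw [Matrix.mul_apply]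
      have hPik : ∀ k, P i k = c' k * s i := fun k => congrFun (hc' k) i
      simp only [hPik, Matrix.of_apply, Finset.sum_mul]
      exact Finset.sum_congr rfl fun k _ => by ring
    have hmulX : Filter.Tendsto (fun K : ℕ => Ahat ^ K * X) Filter.atTop (nhds (P * X)) :=
      ((continuous_id.matrix_mul continuous_const).tendsto P).comp hPlim
    rw [hPX] at hmulX
    convert hmulX using 2
  exact ⟨part1, part2, part3, part4⟩
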